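/- Let U(X,Y,z) = ∑_{n≥0} P_n(X,Y)·z^{n+1}/(n+1) where P_n(X,Y) = ∑_{j=0}^{n} (-1)^j binom(n+j,j) binom(3n+1,n-j) X^{2n+1+j} Y^{n-j}. Then U satisfies, as formal power series in z over the polynomial ring in X, Y, the cubic equation U·(1 - XY·U)·(1 - X(Y-X)·U) = X·z. -/

import Mathlib

open MvPolynomial

/-- The polynomial `P_n(X,Y)` as a polynomial in the two variables `X = X 0`, `Y = X 1`. -/
noncomputable def nielsenP (n : ℕ) : MvPolynomial (Fin 2) ℚ :=
  ∑ j ∈ Finset.range (n + 1),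
    (-1) ^ j * (Nat.choose (n + j) j : MvPolynomial (Fin 2) ℚ)
      * (Nat.choose (3 * n + 1) (n - j) : MvPolynomial (Fin 2) ℚ)
      * (X 0) ^ (2 * n + 1 + j) * (X 1) ^ (n - j)

/-- The generating series `U(X,Y,z) = ∑_{n ≥ 0} P_n(X,Y) z^{n+1}/(n+1)`. -/
noncomputable def genU : PowerSeries (MvPolynomial (Fin 2) ℚ) :=
  PowerSeries.mk fun k =>
    match k with
    | 0 => 0
    | n + 1 => MvPolynomial.C (((n : ℚ) + 1)⁻¹) * nielsenP n

namespace NielsenAux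

open PowerSeries

noncomputable section

abbrev Rg := MvPolynomial (Fin 2) ℚ

def geo (a : Rg) : PowerSeries Rg := PowerSeries.mk fun n => a ^ n

lemma geo_unit (a : Rg) : (1 - PowerSeries.C (R := Rg) a * PowerSeries.X) * geo a = 1 := by
  ext n
  rcases n with _ | n
  · simp [geo]
  · simp only [sub_mul, one_mul, map_sub, mul_assoc, PowerSeries.coeff_succ_X_mul, PowerSeries.coeff_C_mul,
      geo, PowerSeries.coeff_mk, PowerSeries.coeff_one, pow_succ]
    ring_nf
    simp

def nb (a : Rg) (r : ℕ) : PowerSeries Rg := PowerSeries.mk fun m => (Nat.choose (r + m) m : Rg) * a ^ m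

lemma nb_def (a : Rg) (r m : ℕ) : PowerSeries.coeff (R := Rg) m (nb a r) = (Nat.choose (r + m) m : Rg) * a ^ m := by
  simp [nb]

lemma nb_zero (a : Rg) : nb a 0 = geo a := by
  ext n; simp [nb, geo]

lemma nb_step (a : Rg) (r : ℕ) : (1 - PowerSeries.C (R := Rg) a * PowerSeries.X) * nb a (r+1) = nb a r := by
  refine PowerSeries.ext fun n => ?_
  rcases n with _ | n
  · simp [nb]
  · simp only [sub_mul, one_mul, map_sub, mul_assoc, PowerSeries.coeff_succ_X_mul, PowerSeries.coeff_C_mul,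
      nb, PowerSeries.coeff_mk]
    have h : ((r + 1 + (n + 1)).choose (n + 1) : Rg)
        = ((r + (n+1)).choose (n+1) : ℕ) + ((r + 1 + n).choose n : ℕ) := by
      norm_cast
      rw [show r + 1 + (n+1) = (r + (n+1)) + 1 from by ring, Nat.choose_succ_succ (r+(n+1)) n]
      rw [show r + (n+1) = r + 1 + n from by ring]
      ring
    rw [h]; ring

lemma geo_pow (a : Rg) (r : ℕ) : geo a ^ (r + 1) = nb a r := by
  induction r with
  | zero => simp [nb_zero]
  | succ r ih =>
      rw [pow_succ, ih, ← nb_step a r, show (1 - PowerSeries.C (R := Rg) a * PowerSeries.X) * nb a (r+1) * geo a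
        = ((1 - PowerSeries.C (R := Rg) a * PowerSeries.X) * geo a) * nb a (r+1) from by ring, geo_unit, one_mul]

def aa : Rg := MvPolynomial.X 0 * MvPolynomial.X 1
def bb : Rg := MvPolynomial.X 0 * (MvPolynomial.X 1 - MvPolynomial.X 0)
def cc : Rg := MvPolynomial.X 0
def dd : Rg := MvPolynomial.X 0 ^ 2
def sP : Rg := aa + bb
def pP : Rg := aa * bb
def phi : PowerSeries Rg := PowerSeries.C (R := Rg) cc * geo aa * geo bb
def Qd : PowerSeries Rg := (1 - PowerSeries.C (R := Rg) aa * PowerSeries.X) * (1 - PowerSeries.C (R := Rg) bb * PowerSeries.X)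

lemma Qd_eq : Qd = 1 - PowerSeries.C (R := Rg) sP * PowerSeries.X + PowerSeries.C (R := Rg) pP * PowerSeries.X^2 := by
  simp only [Qd, sP, pP, map_add, map_mul]; ring

lemma phi_Q : phi * Qd = PowerSeries.C (R := Rg) cc := by
  rw [phi, Qd, show PowerSeries.C (R := Rg) cc * geo aa * geo bb * ((1 - PowerSeries.C (R := Rg) aa * PowerSeries.X) * (1 - PowerSeries.C (R := Rg) bb * PowerSeries.X))
    = PowerSeries.C (R := Rg) cc * (((1 - PowerSeries.C (R := Rg) aa * PowerSeries.X) * geo aa) * ((1 - PowerSeries.C (R := Rg) bb * PowerSeries.X) * geo bb)) from by ring,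
    geo_unit, geo_unit]; ring

lemma dgeo (a : Rg) : (1 - PowerSeries.C (R := Rg) a * PowerSeries.X) * (d⁄dX Rg (geo a)) = PowerSeries.C (R := Rg) a * geo a := by
  have h := congrArg (d⁄dX Rg) (geo_unit a)
  rw [Derivation.leibniz] at h
  simp only [map_one, PowerSeries.derivative_X, PowerSeries.derivative_C, map_sub, Derivation.leibniz,
    Derivation.map_one_eq_zero, smul_eq_mul, mul_one, mul_zero, zero_add, add_zero] at h
  linear_combination h

lemma dphi : Qd * (d⁄dX Rg phi) = (PowerSeries.C (R := Rg) sP - 2 * PowerSeries.C (R := Rg) pP * PowerSeries.X) * phi := by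
  have hd : d⁄dX Rg phi = PowerSeries.C (R := Rg) cc * (geo aa * d⁄dX Rg (geo bb) + geo bb * d⁄dX Rg (geo aa)) := by
    rw [phi]
    simp only [Derivation.leibniz, smul_eq_mul, PowerSeries.derivative_C, mul_zero, add_zero]
    ring
  rw [hd, Qd, phi, sP, pP, map_add, map_mul]
  linear_combination (PowerSeries.C (R := Rg) cc * geo aa * (1 - PowerSeries.C (R := Rg) aa * PowerSeries.X)) * dgeo bb
    + (PowerSeries.C (R := Rg) cc * geo bb * (1 - PowerSeries.C (R := Rg) bb * PowerSeries.X)) * dgeo aa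

lemma dphipow (n : ℕ) : Qd * (d⁄dX Rg (phi ^ (n+1)))
    = (n+1 : ℕ) • ((PowerSeries.C (R := Rg) sP - 2 * PowerSeries.C (R := Rg) pP * PowerSeries.X) * phi ^ (n+1)) := by
  rw [Derivation.leibniz_pow]
  simp only [Nat.add_sub_cancel, smul_eq_mul, nsmul_eq_mul]
  rw [show Qd * ((↑(n + 1) : PowerSeries Rg) * (phi ^ n * d⁄dX Rg phi))
    = (↑(n + 1) : PowerSeries Rg) * (phi ^ n * (Qd * d⁄dX Rg phi)) from by ring, dphi]
  ring

lemma coeff_CX (r : Rg) (f : PowerSeries Rg) (m : ℕ) :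
    PowerSeries.coeff (R := Rg) (m+1) (PowerSeries.C (R := Rg) r * PowerSeries.X * f) = r * PowerSeries.coeff (R := Rg) m f := by
  rw [mul_assoc, PowerSeries.coeff_C_mul, PowerSeries.coeff_succ_X_mul]

lemma coeff_CX0 (r : Rg) (f : PowerSeries Rg) :
    PowerSeries.coeff (R := Rg) 0 (PowerSeries.C (R := Rg) r * PowerSeries.X * f) = 0 := by
  rw [mul_assoc, PowerSeries.coeff_C_mul, PowerSeries.coeff_zero_eq_constantCoeff, map_mul, PowerSeries.constantCoeff_X]
  ring

lemma coeff_CXX (r : Rg) (f : PowerSeries Rg) (m : ℕ) :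
    PowerSeries.coeff (R := Rg) (m+2) (PowerSeries.C (R := Rg) r * PowerSeries.X^2 * f) = r * PowerSeries.coeff (R := Rg) m f := by
  rw [show PowerSeries.C (R := Rg) r * PowerSeries.X^2 * f = PowerSeries.C (R := Rg) r * PowerSeries.X * (PowerSeries.X * f) from by ring, coeff_CX, PowerSeries.coeff_succ_X_mul]

lemma coeff_CXX1 (r : Rg) (f : PowerSeries Rg) :
    PowerSeries.coeff (R := Rg) 1 (PowerSeries.C (R := Rg) r * PowerSeries.X^2 * f) = 0 := by
  rw [show PowerSeries.C (R := Rg) r * PowerSeries.X^2 * f = PowerSeries.C (R := Rg) r * PowerSeries.X * (PowerSeries.X * f) from by ring, coeff_CX,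
    PowerSeries.coeff_zero_eq_constantCoeff, map_mul, PowerSeries.constantCoeff_X]
  ring

lemma coeff_CXX0 (r : Rg) (f : PowerSeries Rg) :
    PowerSeries.coeff (R := Rg) 0 (PowerSeries.C (R := Rg) r * PowerSeries.X^2 * f) = 0 := by
  rw [show PowerSeries.C (R := Rg) r * PowerSeries.X^2 * f = PowerSeries.C (R := Rg) r * PowerSeries.X * (PowerSeries.X * f) from by ring, coeff_CX0]

lemma coeff_nsmul (k n : ℕ) (f : PowerSeries Rg) : PowerSeries.coeff (R := Rg) n (k • f) = (k:Rg) * PowerSeries.coeff (R := Rg) n f := by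
  rw [map_nsmul, nsmul_eq_mul]

lemma coeff_two_mul (m : ℕ) (f : PowerSeries Rg) :
    PowerSeries.coeff (R := Rg) m (2 * f) = 2 * PowerSeries.coeff (R := Rg) m f := by
  rw [two_mul, map_add, two_mul]

lemma GL0 (n : ℕ) : PowerSeries.coeff (R := Rg) 1 (phi^(n+1)) = ((n:Rg)+1) * (sP * PowerSeries.coeff (R := Rg) 0 (phi^(n+1))) := by
  have h := congrArg (PowerSeries.coeff (R := Rg) 0) (dphipow n)
  rw [Qd_eq, show (1 - PowerSeries.C (R := Rg) sP * PowerSeries.X + PowerSeries.C (R := Rg) pP * PowerSeries.X^2) * (d⁄dX Rg (phi ^ (n+1)))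
      = d⁄dX Rg (phi ^ (n+1)) - PowerSeries.C (R := Rg) sP * PowerSeries.X * (d⁄dX Rg (phi ^ (n+1)))
        + PowerSeries.C (R := Rg) pP * PowerSeries.X^2 * (d⁄dX Rg (phi ^ (n+1))) from by ring] at h
  rw [map_add, map_sub, coeff_CX0, coeff_CXX0, coeff_nsmul, PowerSeries.coeff_derivative,
    show (PowerSeries.C (R := Rg) sP - 2 * PowerSeries.C (R := Rg) pP * PowerSeries.X) * phi ^ (n+1)
      = PowerSeries.C (R := Rg) sP * phi^(n+1) - PowerSeries.C (R := Rg) pP * PowerSeries.X * (2 * phi^(n+1)) from by ring,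
    map_sub, PowerSeries.coeff_C_mul, coeff_CX0] at h
  push_cast at h ⊢
  linear_combination h

lemma keyGL (n m : ℕ) : ((m:Rg)+2) * PowerSeries.coeff (R := Rg) (m+2) (phi^(n+1))
    = ((n:Rg)+(m:Rg)+2) * (sP * PowerSeries.coeff (R := Rg) (m+1) (phi^(n+1)))
      - (2*(n:Rg)+(m:Rg)+2) * (pP * PowerSeries.coeff (R := Rg) m (phi^(n+1))) := by
  have h := congrArg (PowerSeries.coeff (R := Rg) (m+1)) (dphipow n)
  rw [Qd_eq, show (1 - PowerSeries.C (R := Rg) sP * PowerSeries.X + PowerSeries.C (R := Rg) pP * PowerSeries.X^2) * (d⁄dX Rg (phi ^ (n+1)))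
      = d⁄dX Rg (phi ^ (n+1)) - PowerSeries.C (R := Rg) sP * PowerSeries.X * (d⁄dX Rg (phi ^ (n+1)))
        + PowerSeries.C (R := Rg) pP * PowerSeries.X^2 * (d⁄dX Rg (phi ^ (n+1))) from by ring] at h
  rw [map_add, map_sub, coeff_CX, coeff_nsmul, PowerSeries.coeff_derivative, PowerSeries.coeff_derivative,
    show (PowerSeries.C (R := Rg) sP - 2 * PowerSeries.C (R := Rg) pP * PowerSeries.X) * phi ^ (n+1)
      = PowerSeries.C (R := Rg) sP * phi^(n+1) - PowerSeries.C (R := Rg) pP * PowerSeries.X * (2 * phi^(n+1)) from by ring,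
    map_sub, PowerSeries.coeff_C_mul, coeff_CX] at h
  rcases m with _ | m
  · rw [coeff_CXX1, coeff_two_mul] at h
    push_cast at h ⊢
    linear_combination h
  · rw [coeff_CXX, PowerSeries.coeff_derivative, coeff_two_mul] at h
    push_cast at h ⊢
    linear_combination h

lemma phipow_Q (n : ℕ) : phi^(n+1) * Qd = PowerSeries.C (R := Rg) cc * phi^n := by
  rw [pow_succ, show phi^n * phi * Qd = phi^n * (phi * Qd) from by ring, phi_Q]; ring

lemma L2a (n : ℕ) : PowerSeries.coeff (R := Rg) 0 (phi^(n+1)) = cc * PowerSeries.coeff (R := Rg) 0 (phi^n) := by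
  have h := congrArg (PowerSeries.constantCoeff (R := Rg)) (phipow_Q n)
  rw [map_mul, map_mul, Qd_eq] at h
  simp only [map_add, map_sub, map_one, map_mul, map_pow, PowerSeries.constantCoeff_X, PowerSeries.constantCoeff_C] at h
  rw [PowerSeries.coeff_zero_eq_constantCoeff, map_pow, map_pow]
  simpa using h

lemma L2b (n : ℕ) : cc * PowerSeries.coeff (R := Rg) 1 (phi^n)
    = PowerSeries.coeff (R := Rg) 1 (phi^(n+1)) - sP * PowerSeries.coeff (R := Rg) 0 (phi^(n+1)) := by
  have h := congrArg (PowerSeries.coeff (R := Rg) 1) (phipow_Q n)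
  rw [Qd_eq, show phi^(n+1) * (1 - PowerSeries.C (R := Rg) sP * PowerSeries.X + PowerSeries.C (R := Rg) pP * PowerSeries.X^2)
    = phi^(n+1) - PowerSeries.C (R := Rg) sP * PowerSeries.X * phi^(n+1) + PowerSeries.C (R := Rg) pP * PowerSeries.X^2 * phi^(n+1) from by ring,
    map_add, map_sub, coeff_CX, coeff_CXX1, PowerSeries.coeff_C_mul] at h
  linear_combination -h

lemma L2c (n e : ℕ) : cc * PowerSeries.coeff (R := Rg) (e+2) (phi^n)
    = PowerSeries.coeff (R := Rg) (e+2) (phi^(n+1)) - sP * PowerSeries.coeff (R := Rg) (e+1) (phi^(n+1))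
      + pP * PowerSeries.coeff (R := Rg) e (phi^(n+1)) := by
  have h := congrArg (PowerSeries.coeff (R := Rg) (e+2)) (phipow_Q n)
  rw [Qd_eq, show phi^(n+1) * (1 - PowerSeries.C (R := Rg) sP * PowerSeries.X + PowerSeries.C (R := Rg) pP * PowerSeries.X^2)
    = phi^(n+1) - PowerSeries.C (R := Rg) sP * PowerSeries.X * phi^(n+1) + PowerSeries.C (R := Rg) pP * PowerSeries.X^2 * phi^(n+1) from by ring,
    map_add, map_sub, coeff_CX, coeff_CXX, PowerSeries.coeff_C_mul] at h
  linear_combination -h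

def EE (n k : ℕ) : Rg := if k ≤ n then PowerSeries.coeff (R := Rg) (n-k) (phi^n) else 0

lemma EE_def (n k : ℕ) : EE n k = if k ≤ n then PowerSeries.coeff (R := Rg) (n-k) (phi^n) else 0 := rfl

lemma StarE (k e : ℕ) : ((e:Rg)+1) * EE (k+e+1) k
    = ((k:Rg)+2*(e:Rg)+1) * (sP * EE (k+e+1) (k+1))
      - (2*(k:Rg)+3*(e:Rg)+1) * (pP * EE (k+e+1) (k+2)) := by
  rcases e with _ | e
  · rw [EE, EE, EE, if_pos (by omega), if_pos (by omega), if_neg (by omega),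
      show k+0+1-k = 1 from by omega, show k+0+1-(k+1) = 0 from by omega,
      show k+0+1 = k+1 from by omega]
    push_cast
    linear_combination GL0 k
  · rw [EE, EE, EE, if_pos (by omega), if_pos (by omega), if_pos (by omega),
      show k+(e+1)+1-k = e+2 from by omega, show k+(e+1)+1-(k+1) = e+1 from by omega,
      show k+(e+1)+1-(k+2) = e from by omega, show k+(e+1)+1 = (k+e+1)+1 from by omega]
    have h := keyGL (k+e+1) e
    push_cast at h ⊢
    linear_combination h

lemma L2E (k d : ℕ) : cc * EE (k+d) k
    = EE (k+d+1) (k+1) - sP * EE (k+d+1) (k+2) + pP * EE (k+d+1) (k+3) := by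
  rcases d with _ | d
  · rw [EE, EE, EE, EE, if_pos (by omega), if_pos (by omega), if_neg (by omega),
      if_neg (by omega), show k+0-k = 0 from by omega, show k+0+1-(k+1) = 0 from by omega,
      show k+0 = k from by omega, show k+0+1 = k+1 from by omega]
    rw [L2a k]; ring
  rcases d with _ | d
  · rw [EE, EE, EE, EE, if_pos (by omega), if_pos (by omega), if_pos (by omega),
      if_neg (by omega), show k+1-k = 1 from by omega, show k+1+1-(k+1) = 1 from by omega,
      show k+1+1-(k+2) = 0 from by omega]
    rw [show k+1+1 = (k+1)+1 from rfl]
    rw [L2b (k+1)]; ring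
  · rw [EE, EE, EE, EE, if_pos (by omega), if_pos (by omega), if_pos (by omega),
      if_pos (by omega), show k+(d+2)-k = d+2 from by omega,
      show k+(d+2)+1-(k+1) = d+2 from by omega, show k+(d+2)+1-(k+2) = d+1 from by omega,
      show k+(d+2)+1-(k+3) = d from by omega, show k+(d+2)+1 = (k+(d+2))+1 from rfl]
    rw [L2c (k+(d+2)) d]

lemma keyB (M : ℕ) : EE (M+2) 1 = 2 * (sP * EE (M+2) 2) - 3 * (pP * EE (M+2) 3) := by
  rcases M with _ | M
  · simp only [EE, if_pos (show (1:ℕ) ≤ 0+2 by omega), if_pos (show (2:ℕ) ≤ 0+2 by omega),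
      if_neg (show ¬((3:ℕ) ≤ 0+2) by omega)]
    simp only [show 0+2-1 = 1 from rfl, show 0+2-2 = 0 from rfl, show (0:ℕ)+2 = 1+1 from rfl,
      mul_zero, sub_zero]
    have h := GL0 1
    push_cast at h
    linear_combination h
  · have h := keyGL (M+2) M
    have hc : ((M:Rg)+2) ≠ 0 := by
      intro hx
      have h2 : ((M+2 : ℕ) : Rg) = 0 := by push_cast; linear_combination hx
      exact Nat.cast_ne_zero.mpr (by omega) h2
    rw [EE, EE, EE, if_pos (by omega), if_pos (by omega), if_pos (by omega),
      show M+1+2-1 = M+2 from by omega, show M+1+2-2 = M+1 from by omega,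
      show M+1+2-3 = M from by omega, show M+1+2 = (M+2)+1 from by omega]
    apply mul_left_cancel₀ hc
    push_cast at h ⊢
    linear_combination h

lemma geo_const (a : Rg) : PowerSeries.constantCoeff (R := Rg) (geo a) = 1 := by
  have h := congrArg (PowerSeries.constantCoeff (R := Rg)) (geo_unit a)
  simp only [map_mul, map_sub, map_one, PowerSeries.constantCoeff_X, PowerSeries.constantCoeff_C, mul_zero,
    sub_zero, one_mul] at h
  exact h

lemma phi_const : PowerSeries.constantCoeff (R := Rg) phi = cc := by
  rw [phi, map_mul, map_mul, geo_const, geo_const, PowerSeries.constantCoeff_C]; ring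

lemma ccoeff0 (n r : ℕ) : PowerSeries.coeff (R := Rg) 0 (phi^n * geo aa^r) = cc^n := by
  rw [PowerSeries.coeff_zero_eq_constantCoeff, map_mul, map_pow, map_pow, phi_const, geo_const]
  ring

lemma geo_move : geo aa * (1 - PowerSeries.C (R := Rg) bb * PowerSeries.X) = 1 + PowerSeries.C (R := Rg) dd * PowerSeries.X * geo aa := by
  have hd : PowerSeries.C (R := Rg) aa - PowerSeries.C (R := Rg) bb = PowerSeries.C (R := Rg) dd := by
    rw [← map_sub]; congr 1; rw [aa, bb, dd]; ring
  linear_combination geo_unit aa + PowerSeries.X * geo aa * hd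

lemma phi_detail : phi * (1 - PowerSeries.C (R := Rg) bb * PowerSeries.X) = PowerSeries.C (R := Rg) cc * geo aa := by
  rw [phi, show PowerSeries.C (R := Rg) cc * geo aa * geo bb * (1 - PowerSeries.C (R := Rg) bb * PowerSeries.X)
    = PowerSeries.C (R := Rg) cc * geo aa * ((1 - PowerSeries.C (R := Rg) bb * PowerSeries.X) * geo bb) from by ring, geo_unit, mul_one]

lemma Frec (n r : ℕ) : phi^(n+1) * geo aa^r + PowerSeries.C (R := Rg) dd * PowerSeries.X * (phi^(n+1) * geo aa^(r+1))
    = PowerSeries.C (R := Rg) cc * (phi^n * geo aa^(r+2)) := by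
  linear_combination (phi^n * geo aa^r * geo aa) * phi_detail
    - (phi^n * geo aa^r * phi) * geo_move

lemma cFrec (n r m : ℕ) : PowerSeries.coeff (R := Rg) (m+1) (phi^(n+1) * geo aa^r)
    = cc * PowerSeries.coeff (R := Rg) (m+1) (phi^n * geo aa^(r+2)) - dd * PowerSeries.coeff (R := Rg) m (phi^(n+1) * geo aa^(r+1)) := by
  have h := congrArg (PowerSeries.coeff (R := Rg) (m+1)) (Frec n r)
  rw [map_add, coeff_CX, PowerSeries.coeff_C_mul] at h
  linear_combination h

def Gfun (n r m : ℕ) : Rg := cc^n * ∑ k ∈ Finset.range (m+1),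
  (-1)^k * (Nat.choose (n+k-1) k : Rg) * (Nat.choose (2*n+r+m-1) (m-k) : Rg) * dd^k * aa^(m-k)

lemma Gstep (n r m : ℕ) :
    cc * Gfun n (r+2) (m+1) - dd * Gfun (n+1) (r+1) m = Gfun (n+1) r (m+1) := by
  rw [Gfun, Gfun, Gfun]
  simp only [show 2*n+(r+2)+(m+1)-1 = 2*n+r+m+2 from by omega,
    show 2*(n+1)+(r+1)+m-1 = 2*n+r+m+2 from by omega,
    show 2*(n+1)+r+(m+1)-1 = 2*n+r+m+2 from by omega,
    show ∀ k, n+1+k-1 = n+k from fun k => by omega]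
  have h : (∑ k ∈ Finset.range (m+1+1),
        (-1)^k * (Nat.choose (n+k) k : Rg) * (Nat.choose (2*n+r+m+2) (m+1-k) : Rg) * dd^k * aa^(m+1-k))
      = (∑ k ∈ Finset.range (m+1+1),
        (-1)^k * (Nat.choose (n+k-1) k : Rg) * (Nat.choose (2*n+r+m+2) (m+1-k) : Rg) * dd^k * aa^(m+1-k))
      - dd * (∑ k ∈ Finset.range (m+1),
        (-1)^k * (Nat.choose (n+k) k : Rg) * (Nat.choose (2*n+r+m+2) (m-k) : Rg) * dd^k * aa^(m-k)) := by
    rw [Finset.sum_range_succ', Finset.sum_range_succ'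
      (fun k => (-1)^k * (Nat.choose (n+k-1) k : Rg) * (Nat.choose (2*n+r+m+2) (m+1-k) : Rg) * dd^k * aa^(m+1-k)),
      Finset.mul_sum]
    have hterm : ∀ k ∈ Finset.range (m+1),
        (-1)^(k+1) * (Nat.choose (n+(k+1)) (k+1) : Rg) * (Nat.choose (2*n+r+m+2) (m+1-(k+1)) : Rg) * dd^(k+1) * aa^(m+1-(k+1))
        = (-1)^(k+1) * (Nat.choose (n+(k+1)-1) (k+1) : Rg) * (Nat.choose (2*n+r+m+2) (m+1-(k+1)) : Rg) * dd^(k+1) * aa^(m+1-(k+1))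
          - dd * ((-1)^k * (Nat.choose (n+k) k : Rg) * (Nat.choose (2*n+r+m+2) (m-k) : Rg) * dd^k * aa^(m-k)) := by
      intro k hk
      rw [show m+1-(k+1) = m-k from by omega, show n+(k+1)-1 = n+k from by omega,
        show n+(k+1) = (n+k)+1 from by omega, show (k:ℕ)+1 = k+1 from rfl,
        Nat.choose_succ_succ (n+k) k]
      push_cast
      ring
    rw [Finset.sum_congr rfl hterm, Finset.sum_sub_distrib]
    simp only [Nat.choose_zero_right, Nat.cast_one, pow_zero, Nat.sub_zero]
    ring
  rw [h]
  ring

lemma Fmaster (n : ℕ) : ∀ m r, PowerSeries.coeff (R := Rg) m (phi^n * geo aa^r) = Gfun n r m := by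
  induction n with
  | zero =>
    intro m r
    rw [pow_zero, one_mul, Gfun, pow_zero, one_mul]
    have hsum : (∑ k ∈ Finset.range (m+1),
        (-1)^k * (Nat.choose (0+k-1) k : Rg) * (Nat.choose (2*0+r+m-1) (m-k) : Rg) * dd^k * aa^(m-k))
        = (Nat.choose (r+m-1) m : Rg) * aa^m := by
      rw [Finset.sum_eq_single 0]
      · rw [show (2*0+r+m-1) = r+m-1 from by omega, show m-0 = m from rfl,
          show (0:ℕ)+0-1 = 0 from rfl]
        norm_num
      · intro b _ hb
        rw [show 0+b-1 = b-1 from by omega, Nat.choose_eq_zero_of_lt (by omega)]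
        push_cast; ring
      · intro h; exact absurd (Finset.mem_range.mpr (by omega)) h
    rw [hsum]
    rcases r with _ | r'
    · rw [pow_zero]
      rcases m with _ | m'
      · simp
      · rw [PowerSeries.coeff_one, if_neg (by omega), show 0+(m'+1)-1 = m' from by omega,
          Nat.choose_eq_zero_of_lt (by omega)]
        push_cast; ring
    · rw [geo_pow, nb_def, show r'+1+m-1 = r'+m from by omega]
  | succ n ihn =>
    intro m
    induction m with
    | zero =>
      intro r
      rw [ccoeff0, Gfun]
      simp
    | succ m ihm =>
      intro r
      rw [cFrec n r m, ihn (m+1) (r+2), ihm (r+1), Gstep]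

lemma nielsenP_eq (m : ℕ) : nielsenP m = PowerSeries.coeff (R := Rg) m (phi^(m+1)) := by
  have h := Fmaster (m+1) m 0
  rw [pow_zero, mul_one] at h
  rw [h, Gfun, Finset.mul_sum, nielsenP]
  apply Finset.sum_congr rfl
  intro k hk
  have hk' : k ≤ m := Nat.lt_succ_iff.mp (Finset.mem_range.mp hk)
  rw [show m+1+k-1 = m+k from by omega, show 2*(m+1)+0+m-1 = 3*m+1 from by omega,
    cc, dd, aa, show 2*m+1+k = (m+1)+(2*k+(m-k)) from by omega, pow_add, pow_add]
  ring

lemma nielsenP_zero : nielsenP 0 = cc := by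
  rw [nielsenP]
  simp [cc]

lemma natcast_ne (m : ℕ) : ((m:Rg)+1) ≠ 0 := by
  intro hx
  have h2 : ((m+1 : ℕ) : Rg) = 0 := by push_cast; linear_combination hx
  exact Nat.cast_ne_zero.mpr (by omega) h2

lemma genU_coeff0 : PowerSeries.coeff (R := Rg) 0 genU = 0 := by
  simp [genU]

lemma genU_coeff (m : ℕ) : PowerSeries.coeff (R := Rg) (m+1) genU = MvPolynomial.C (((m:ℚ)+1)⁻¹) * nielsenP m := by
  simp [genU]

lemma An1 (m : ℕ) : ((m:Rg)+1) * PowerSeries.coeff (R := Rg) (m+1) genU = PowerSeries.coeff (R := Rg) m (phi^(m+1)) := by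
  rw [genU_coeff, ← nielsenP_eq,
    show ((m:Rg)+1) = MvPolynomial.C ((m:ℚ)+1) from by simp, ← mul_assoc,
    ← map_mul, mul_inv_cancel₀ (show ((m:ℚ)+1) ≠ 0 from by positivity), map_one, one_mul]

lemma genU_pow_zero {n k : ℕ} (h : n < k) : PowerSeries.coeff (R := Rg) n (genU^k) = 0 := by
  obtain ⟨t, ht⟩ := PowerSeries.X_dvd_iff.mpr
    (show PowerSeries.constantCoeff (R := Rg) genU = 0 from by rw [← PowerSeries.coeff_zero_eq_constantCoeff]; exact genU_coeff0)
  rw [ht, mul_comm PowerSeries.X t, mul_pow, PowerSeries.coeff_mul_X_pow', if_neg (by omega)]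

def Err : PowerSeries Rg := genU - (PowerSeries.C (R := Rg) cc * PowerSeries.X + PowerSeries.C (R := Rg) sP * genU^2 - PowerSeries.C (R := Rg) pP * genU^3)

lemma mainAB : ∀ n : ℕ, (∀ k : ℕ, 1 ≤ k → (n:Rg) * PowerSeries.coeff (R := Rg) n (genU^k) = (k:Rg) * EE n k)
    ∧ PowerSeries.coeff (R := Rg) n Err = 0 := by
  intro n
  induction n using Nat.strong_induction_on with
  | _ n IH =>
  have hA : ∀ k : ℕ, 1 ≤ k → (n:Rg) * PowerSeries.coeff (R := Rg) n (genU^k) = (k:Rg) * EE n k := by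
    have haux : ∀ j k : ℕ, 1 ≤ k → n < k + j
        → (n:Rg) * PowerSeries.coeff (R := Rg) n (genU^k) = (k:Rg) * EE n k := by
      intro j
      induction j with
      | zero =>
        intro k hk1 hnk
        rw [genU_pow_zero (by omega), EE_def, if_neg (by omega), mul_zero, mul_zero]
      | succ j hj =>
        intro k hk1 hnk
        by_cases hc : n < k + j
        · exact hj k hk1 hc
        rcases k with _ | k1
        · omega
        rcases k1 with _ | k2
        · -- k = 1, n = j+1
          have hn : n = j + 1 := by omega
          subst hn
          rw [pow_one, EE_def, if_pos (by omega), show j+1-1 = j from by omega]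
          have h := An1 j
          push_cast
          linear_combination h
        · -- k = k2+2
          have hkj : k2 + 2 + j = n := by omega
          subst hkj
          have hgU : genU^(k2+2) = PowerSeries.C (R := Rg) cc * PowerSeries.X * genU^(k2+1) + PowerSeries.C (R := Rg) sP * genU^(k2+3)
              - PowerSeries.C (R := Rg) pP * genU^(k2+4) + genU^(k2+1) * Err := by
            rw [Err]; ring
          have hErrterm : PowerSeries.coeff (R := Rg) (k2+2+j) (genU^(k2+1) * Err) = 0 := by
            rw [PowerSeries.coeff_mul]
            apply Finset.sum_eq_zero
            intro x hx
            have hx' := Finset.HasAntidiagonal.mem_antidiagonal.mp hx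
            by_cases h2 : x.2 < k2+2+j
            · rw [(IH x.2 h2).2, mul_zero]
            · have hx1 : x.1 = 0 := by omega
              rw [hx1, genU_pow_zero (by omega), zero_mul]
          have e1 : PowerSeries.coeff (R := Rg) (k2+2+j) (PowerSeries.C (R := Rg) cc * PowerSeries.X * genU^(k2+1))
              = cc * PowerSeries.coeff (R := Rg) (k2+1+j) (genU^(k2+1)) := by
            rw [show k2+2+j = (k2+1+j)+1 from by omega, coeff_CX]
          have hsplit : PowerSeries.coeff (R := Rg) (k2+2+j) (genU^(k2+2))
              = cc * PowerSeries.coeff (R := Rg) (k2+1+j) (genU^(k2+1)) + sP * PowerSeries.coeff (R := Rg) (k2+2+j) (genU^(k2+3))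
                - pP * PowerSeries.coeff (R := Rg) (k2+2+j) (genU^(k2+4)) := by
            rw [hgU, map_add, map_sub, map_add, e1, PowerSeries.coeff_C_mul, PowerSeries.coeff_C_mul, hErrterm, add_zero]
          have h1 : ((k2+1+j : ℕ):Rg) * PowerSeries.coeff (R := Rg) (k2+1+j) (genU^(k2+1))
              = ((k2+1:ℕ):Rg) * EE (k2+1+j) (k2+1) :=
            (IH (k2+1+j) (by omega)).1 (k2+1) (by omega)
          have h2 : ((k2+2+j : ℕ):Rg) * PowerSeries.coeff (R := Rg) (k2+2+j) (genU^(k2+3))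
              = ((k2+3:ℕ):Rg) * EE (k2+2+j) (k2+3) := hj (k2+3) (by omega) (by omega)
          have h3 : ((k2+2+j : ℕ):Rg) * PowerSeries.coeff (R := Rg) (k2+2+j) (genU^(k2+4))
              = ((k2+4:ℕ):Rg) * EE (k2+2+j) (k2+4) := hj (k2+4) (by omega) (by omega)
          have hL := L2E (k2+1) j
          rw [show k2+1+j+1 = k2+2+j from by omega,
            show k2+1+1 = k2+2 from by omega, show k2+1+2 = k2+3 from by omega,
            show k2+1+3 = k2+4 from by omega] at hL
          have hnz : (((k2+2+j:ℕ):Rg) * ((k2+1+j:ℕ):Rg)) ≠ 0 :=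
            mul_ne_zero (Nat.cast_ne_zero.mpr (by omega)) (Nat.cast_ne_zero.mpr (by omega))
          rw [← sub_eq_zero]
          refine (mul_eq_zero.mp ?_).resolve_left hnz
          rcases j with _ | e
          · have z2 : EE (k2+2+0) (k2+3) = 0 := by rw [EE_def, if_neg (by omega)]
            have z3 : EE (k2+2+0) (k2+4) = 0 := by rw [EE_def, if_neg (by omega)]
            push_cast at h1 h2 h3 hsplit hL z2 z3 ⊢
            linear_combination (((k2:Rg)+2)^2*((k2:Rg)+1)) * hsplit
              + (((k2:Rg)+2)^2*cc) * h1 + (((k2:Rg)+2)^2*((k2:Rg)+1)) * hL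
              + (((k2:Rg)+2)*((k2:Rg)+1)*sP) * h2 - (((k2:Rg)+2)*((k2:Rg)+1)*pP) * h3
              + (((k2:Rg)+2)*((k2:Rg)+1)*((k2:Rg)+3)*sP - ((k2:Rg)+2)^2*((k2:Rg)+1)*sP) * z2
              + (((k2:Rg)+2)^2*((k2:Rg)+1)*pP - ((k2:Rg)+2)*((k2:Rg)+1)*((k2:Rg)+4)*pP) * z3
          · have hstar := StarE (k2+2) e
            rw [show k2+2+e+1 = k2+2+(e+1) from by omega,
              show k2+2+1 = k2+3 from by omega, show k2+2+2 = k2+4 from by omega] at hstar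
            push_cast at h1 h2 h3 hsplit hL hstar ⊢
            linear_combination
              (((k2:Rg)+2+((e:Rg)+1))^2*((k2:Rg)+1+((e:Rg)+1))) * hsplit
              + (((k2:Rg)+2+((e:Rg)+1))^2*cc) * h1
              + (((k2:Rg)+2+((e:Rg)+1))^2*((k2:Rg)+1)) * hL
              + (((k2:Rg)+2+((e:Rg)+1))*((k2:Rg)+1+((e:Rg)+1))*sP) * h2
              - (((k2:Rg)+2+((e:Rg)+1))*((k2:Rg)+1+((e:Rg)+1))*pP) * h3
              - ((k2:Rg)+2+((e:Rg)+1)) * hstar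
    intro k hk1
    exact haux (n+1) k hk1 (by omega)
  refine ⟨hA, ?_⟩
  rcases n with _ | n1
  · simp only [Err, map_sub, map_add, PowerSeries.coeff_C_mul, genU_coeff0,
      genU_pow_zero (show (0:ℕ) < 2 by omega), genU_pow_zero (show (0:ℕ) < 3 by omega),
      PowerSeries.coeff_X, if_neg (show ¬(0 = 1) by omega)]
    ring
  rcases n1 with _ | M
  · have h0 : nielsenP 0 = cc := nielsenP_zero
    simp only [Err, map_sub, map_add, PowerSeries.coeff_C_mul,
      genU_pow_zero (show (1:ℕ) < 2 by omega), genU_pow_zero (show (1:ℕ) < 3 by omega),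
      PowerSeries.coeff_X, if_pos rfl, show (0:ℕ)+1 = 1 from rfl]
    rw [genU_coeff 0, h0]
    norm_num
  · have hu := An1 (M+1)
    have h2 := hA 2 (by omega)
    have h3 := hA 3 (by omega)
    have hk := keyB M
    have hE1 : EE (M+2) 1 = PowerSeries.coeff (R := Rg) (M+1) (phi^(M+2)) := by
      rw [EE_def, if_pos (by omega), show M+2-1 = M+1 from by omega]
    have hc : PowerSeries.coeff (R := Rg) (M+2) Err = PowerSeries.coeff (R := Rg) (M+2) genU
        - (sP * PowerSeries.coeff (R := Rg) (M+2) (genU^2) - pP * PowerSeries.coeff (R := Rg) (M+2) (genU^3)) := by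
      simp only [Err, map_sub, map_add, PowerSeries.coeff_C_mul, PowerSeries.coeff_X,
        if_neg (show ¬(M+2 = 1) by omega)]
      ring
    rw [show M+2 = M+1+1 from by omega] at hk hE1 hc
    have hnz : ((M+2:ℕ):Rg) ≠ 0 := Nat.cast_ne_zero.mpr (by omega)
    refine (mul_eq_zero.mp ?_).resolve_left hnz
    rw [hc]
    push_cast at hu h2 h3 ⊢
    linear_combination hu - sP * h2 + pP * h3 + hk - hE1

lemma Err_eq_zero : Err = 0 := by
  refine PowerSeries.ext fun n => ?_
  rw [(mainAB n).2, map_zero]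

end

end NielsenAux

theorem stmt12 :
    genU * (1 - (PowerSeries.C (R := MvPolynomial (Fin 2) ℚ)) (X 0 * X 1) * genU)
      * (1 - (PowerSeries.C (R := MvPolynomial (Fin 2) ℚ)) (X 0 * (X 1 - X 0)) * genU)
      = (PowerSeries.C (R := MvPolynomial (Fin 2) ℚ)) (X 0) * PowerSeries.X := by
  have hE := NielsenAux.Err_eq_zero
  unfold NielsenAux.Err at hE
  have hs : PowerSeries.C (R := NielsenAux.Rg) NielsenAux.sP
      = PowerSeries.C (R := NielsenAux.Rg) NielsenAux.aa + PowerSeries.C (R := NielsenAux.Rg) NielsenAux.bb := by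
    rw [NielsenAux.sP, map_add]
  have hp : PowerSeries.C (R := NielsenAux.Rg) NielsenAux.pP
      = PowerSeries.C (R := NielsenAux.Rg) NielsenAux.aa * PowerSeries.C (R := NielsenAux.Rg) NielsenAux.bb := by
    rw [NielsenAux.pP, map_mul]
  rw [hs, hp] at hE
  show genU * (1 - PowerSeries.C (R := NielsenAux.Rg) NielsenAux.aa * genU)
      * (1 - PowerSeries.C (R := NielsenAux.Rg) NielsenAux.bb * genU)
      = PowerSeries.C (R := NielsenAux.Rg) NielsenAux.cc * PowerSeries.X
  linear_combination hE
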